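/- Let WN = (P,T,F,i,o) be a sound acyclic free-choice workflow net (AFW-net). For every place y ∈ P, every node x with (x,y) ∈ ∥, and every transition s ∈ y•: there is no acyclic path from x to s if and only if (x,s) ∈ ∥. -/

import Mathlib

/-- A Petri net: finite disjoint sets of places and transitions and a flow relation
`F ⊆ (P × T) ∪ (T × P)`. -/
structure PetriNet (α : Type) [DecidableEq α] where
  places : Finset α
  transitions : Finset α
  flow : Finset (α × α)
  disjoint_pt : Disjoint places transitions
  flow_mem : ∀ e ∈ flow,
    (e.1 ∈ places ∧ e.2 ∈ transitions) ∨ (e.1 ∈ transitions ∧ e.2 ∈ places)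

namespace PetriNet

variable {α : Type} [DecidableEq α]

/-- All nodes `P ∪ T` of the net. -/
def nodes (N : PetriNet α) : Finset α := N.places ∪ N.transitions

/-- The preset `•x` of a node. -/
def preset (N : PetriNet α) (x : α) : Finset α :=
  N.nodes.filter (fun p => (p, x) ∈ N.flow)

/-- The postset `x•` of a node. -/
def postset (N : PetriNet α) (x : α) : Finset α :=
  N.nodes.filter (fun s => (x, s) ∈ N.flow)

/-- A path: a nonempty sequence of nodes, each consecutive pair related by the flow. -/
def IsPath (N : PetriNet α) (w : List α) : Prop :=
  w ≠ [] ∧ (∀ x ∈ w, x ∈ N.nodes) ∧ w.Chain' (fun a b => (a, b) ∈ N.flow)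

/-- An acyclic path: a path whose nodes are pairwise distinct. -/
def IsAcyclicPath (N : PetriNet α) (w : List α) : Prop :=
  N.IsPath w ∧ w.Nodup

/-- There is an acyclic path from `x` to `y`. -/
def HasAcyclicPath (N : PetriNet α) (x y : α) : Prop :=
  ∃ w, N.IsAcyclicPath w ∧ w.head? = some x ∧ w.getLast? = some y

/-- `HasPath(x)`: the set of all nodes to which `x` has an acyclic path
(including `x` itself, via the trivial path `(x)` when `x` is a node). -/
def HasPathSet (N : PetriNet α) (x : α) : Set α := {y | N.HasAcyclicPath x y}

/-- A net is acyclic iff no node has a nontrivial path to itself. -/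
def Acyclic (N : PetriNet α) : Prop :=
  ∀ x, ¬ ∃ w, N.IsPath w ∧ 2 ≤ w.length ∧ w.head? = some x ∧ w.getLast? = some x

/-- A transition `t` is enabled in marking `M` iff all its input places carry a token. -/
def Enabled (N : PetriNet α) (M : α → ℕ) (t : α) : Prop :=
  t ∈ N.transitions ∧ ∀ p ∈ N.preset t, 1 ≤ M p

/-- Firing `t` consumes one token from each input place and produces one on each output place. -/
def fire (N : PetriNet α) (M : α → ℕ) (t : α) : α → ℕ := fun p =>
  (M p - (if p ∈ N.preset t then 1 else 0)) + (if p ∈ N.postset t then 1 else 0)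

/-- A step `M —t→ M'`. -/
def Step (N : PetriNet α) (M : α → ℕ) (t : α) (M' : α → ℕ) : Prop :=
  N.Enabled M t ∧ M' = N.fire M t

/-- Reachability via finite occurrence sequences. -/
def Reachable (N : PetriNet α) : (α → ℕ) → (α → ℕ) → Prop :=
  Relation.ReflTransGen (fun M M' => ∃ t, N.Step M t M')

/-- Liveness with respect to an initial marking. -/
def Live (N : PetriNet α) (M₀ : α → ℕ) : Prop :=
  ∀ M, N.Reachable M₀ M → ∀ t ∈ N.transitions, ∃ M', N.Reachable M M' ∧ N.Enabled M' t

/-- Boundedness with respect to an initial marking. -/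
def Bounded (N : PetriNet α) (M₀ : α → ℕ) : Prop :=
  ∃ n : ℕ, ∀ M, N.Reachable M₀ M → ∀ p ∈ N.places, M p ≤ n

/-- Free-choice: every place with more than one output transition is the unique
input of each of those transitions. -/
def FreeChoice (N : PetriNet α) : Prop :=
  ∀ p ∈ N.places, 1 < (N.postset p).card → ∀ t ∈ N.postset p, N.preset t = {p}

/-- A node is active in `M` iff it is a place carrying a token or an enabled transition. -/
def Active (N : PetriNet α) (x : α) (M : α → ℕ) : Prop :=
  (x ∈ N.places ∧ 1 ≤ M x) ∨ (x ∈ N.transitions ∧ N.Enabled M x)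

/-- One unfolding of the defining clauses of the concurrency relation. -/
def concStep (N : PetriNet α) (M₀ : α → ℕ) (R : Set (α × α)) : Set (α × α) :=
  {q | q.1 ≠ q.2 ∧
    (∃ M, N.Reachable M₀ M ∧ N.Active q.1 M ∧ N.Active q.2 M) ∧
    (q.1 ∈ N.transitions → q.2 ∈ N.places → ∀ z ∈ N.preset q.1, (z, q.2) ∈ R) ∧
    (q.1 ∈ N.places → q.2 ∈ N.transitions → ∀ z ∈ N.preset q.2, (z, q.1) ∈ R) ∧
    (q.1 ∈ N.transitions → q.2 ∈ N.transitions →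
      ∀ z ∈ N.preset q.1, ∀ z' ∈ N.preset q.2, (z, z') ∈ R)}

/-- The concurrency relation `∥`: the greatest relation consistent with its
defining clauses (Def. of concurrency). -/
def Concurrent (N : PetriNet α) (M₀ : α → ℕ) : Set (α × α) :=
  ⋃₀ {R | R ⊆ N.concStep M₀ R}

/-- The number of places on `w` carrying at least one token in `M`. -/
def tokensOn (N : PetriNet α) (M : α → ℕ) (w : List α) : ℕ :=
  (w.toFinset.filter (fun p => p ∈ N.places ∧ 1 ≤ M p)).card

end PetriNet

/-- A workflow net: a Petri net with a source place `i` (`•i = ∅`), a sink place `o`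
(`o• = ∅`), and every node on a path from `i` to `o`. -/
structure WorkflowNet (α : Type) [DecidableEq α] extends PetriNet α where
  source : α
  sink : α
  source_mem : source ∈ places
  sink_mem : sink ∈ places
  source_no_pre : toPetriNet.preset source = ∅
  sink_no_post : toPetriNet.postset sink = ∅
  all_on_path : ∀ x ∈ toPetriNet.nodes, ∃ w, toPetriNet.IsPath w ∧
    w.head? = some source ∧ w.getLast? = some sink ∧ x ∈ w

namespace WorkflowNet

variable {α : Type} [DecidableEq α]

/-- The initial marking: one token on the source, none elsewhere. -/
def initialMarking (W : WorkflowNet α) : α → ℕ := fun p => if p = W.source then 1 else 0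

/-- The terminal marking: one token on the sink, none elsewhere. -/
def terminalMarking (W : WorkflowNet α) : α → ℕ := fun p => if p = W.sink then 1 else 0

/-- Soundness of a workflow net. -/
def Sound (W : WorkflowNet α) : Prop :=
  (∀ M, W.toPetriNet.Reachable W.initialMarking M →
    W.toPetriNet.Reachable M W.terminalMarking ∧ (1 ≤ M W.sink → M = W.terminalMarking)) ∧
  (∀ t ∈ W.transitions, ∃ M M', W.toPetriNet.Reachable W.initialMarking M ∧
    W.toPetriNet.Step M t M')

end WorkflowNet

set_option linter.unusedSectionVars false

namespace PetriNet

variable {α : Type} [DecidableEq α] {N : PetriNet α}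

lemma mem_preset' {p x : α} : p ∈ N.preset x ↔ p ∈ N.nodes ∧ (p, x) ∈ N.flow := by
  simp [preset, Finset.mem_filter]

lemma mem_postset' {x s : α} : s ∈ N.postset x ↔ s ∈ N.nodes ∧ (x, s) ∈ N.flow := by
  simp [postset, Finset.mem_filter]

lemma place_mem_nodes {p : α} (h : p ∈ N.places) : p ∈ N.nodes := Finset.mem_union_left _ h
lemma trans_mem_nodes {t : α} (h : t ∈ N.transitions) : t ∈ N.nodes := Finset.mem_union_right _ h

lemma not_place_and_trans {x : α} (h1 : x ∈ N.places) (h2 : x ∈ N.transitions) : False :=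
  Finset.disjoint_left.mp N.disjoint_pt h1 h2

lemma flow_mem_nodes {a b : α} (h : (a, b) ∈ N.flow) : a ∈ N.nodes ∧ b ∈ N.nodes := by
  rcases N.flow_mem _ h with ⟨h1, h2⟩ | ⟨h1, h2⟩
  · exact ⟨place_mem_nodes h1, trans_mem_nodes h2⟩
  · exact ⟨trans_mem_nodes h1, place_mem_nodes h2⟩

lemma pre_place {t p : α} (ht : t ∈ N.transitions) (hp : p ∈ N.preset t) : p ∈ N.places := by
  rcases mem_preset'.mp hp with ⟨_, hf⟩
  rcases N.flow_mem _ hf with ⟨h1, _⟩ | ⟨_, h2⟩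
  · exact h1
  · exact (not_place_and_trans h2 ht).elim

lemma post_place {t p : α} (ht : t ∈ N.transitions) (hp : p ∈ N.postset t) : p ∈ N.places := by
  rcases mem_postset'.mp hp with ⟨_, hf⟩
  rcases N.flow_mem _ hf with ⟨h1, _⟩ | ⟨_, h2⟩
  · exact (not_place_and_trans h1 ht).elim
  · exact h2

lemma flow_trans_of_place {p b : α} (hp : p ∈ N.places) (h : (p, b) ∈ N.flow) :
    b ∈ N.transitions := by
  rcases N.flow_mem _ h with ⟨_, h2⟩ | ⟨h1, _⟩
  · exact h2
  · exact absurd hp (fun h => not_place_and_trans h h1)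

lemma flow_place_of_trans {t b : α} (ht : t ∈ N.transitions) (h : (t, b) ∈ N.flow) :
    b ∈ N.places := by
  rcases N.flow_mem _ h with ⟨h1, _⟩ | ⟨_, h2⟩
  · exact absurd ht (fun h => not_place_and_trans h1 h)
  · exact h2

lemma flow_trans_of_place' {p b : α} (hp : p ∈ N.places) (h : (b, p) ∈ N.flow) :
    b ∈ N.transitions := by
  rcases N.flow_mem _ h with ⟨_, h2⟩ | ⟨h1, _⟩
  · exact absurd hp (fun hh => not_place_and_trans hh h2)
  · exact h1

/-! ### Paths -/

lemma exists_dup_decomp {l : List α} (h : ¬ l.Nodup) :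
    ∃ (a : α) (l₁ l₂ l₃ : List α), l = l₁ ++ a :: (l₂ ++ a :: l₃) := by
  induction l with
  | nil => simp at h
  | cons b rest ih =>
    by_cases hb : b ∈ rest
    · obtain ⟨s, t, rfl⟩ := List.append_of_mem hb
      exact ⟨b, [], s, t, by simp⟩
    · have hr : ¬ rest.Nodup := fun hn => h (List.nodup_cons.mpr ⟨hb, hn⟩)
      obtain ⟨a, l₁, l₂, l₃, rfl⟩ := ih hr
      exact ⟨a, b :: l₁, l₂, l₃, rfl⟩

lemma IsPath.nodup (hacyc : N.Acyclic) {w : List α} (hw : N.IsPath w) : w.Nodup := by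
  by_contra h
  obtain ⟨a, l₁, l₂, l₃, rfl⟩ := exists_dup_decomp h
  obtain ⟨hne, hmem, hchain⟩ := hw
  apply hacyc a
  have hinfix : (a :: (l₂ ++ [a])) <:+: (l₁ ++ a :: (l₂ ++ a :: l₃)) := by
    refine ⟨l₁, l₃, ?_⟩
    simp
  refine ⟨a :: (l₂ ++ [a]), ⟨by simp, ?_, hchain.infix hinfix⟩, by simp, by simp, ?_⟩
  · intro x hx
    exact hmem x (hinfix.subset hx)
  · rw [List.getLast?_cons, List.getLast?_append]
    simp

lemma isPath_singleton {x : α} (hx : x ∈ N.nodes) : N.IsPath [x] := ⟨by simp, by simp [hx], by simp [List.Chain']⟩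

lemma IsPath.cons {w : List α} {z h : α} (hw : N.IsPath w) (hh : w.head? = some h)
    (hz : z ∈ N.nodes) (hf : (z, h) ∈ N.flow) : N.IsPath (z :: w) := by
  obtain ⟨hne, hmem, hchain⟩ := hw
  refine ⟨by simp, ?_, ?_⟩
  · intro x hx; rcases List.mem_cons.mp hx with rfl | hx; exacts [hz, hmem x hx]
  · cases w with
    | nil => simp [List.Chain']
    | cons b l =>
      simp only [List.head?_cons, Option.some.injEq] at hh
      subst hh
      exact List.isChain_cons_cons.mpr ⟨hf, hchain⟩

lemma IsPath.concat {w : List α} {b c : α} (hw : N.IsPath w) (hb : w.getLast? = some b)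
    (hc : c ∈ N.nodes) (hf : (b, c) ∈ N.flow) : N.IsPath (w ++ [c]) := by
  obtain ⟨hne, hmem, hchain⟩ := hw
  refine ⟨by simp, ?_, ?_⟩
  · intro x hx
    rcases List.mem_append.mp hx with hx | hx
    · exact hmem x hx
    · simp at hx; subst hx; exact hc
  · rw [List.Chain', List.isChain_append]
    refine ⟨hchain, by simp, ?_⟩
    intro u hu v hv
    rw [hb] at hu; simp at hu hv; subst hu; subst hv; exact hf

lemma IsPath.tail {w : List α} {a : α} (hw : N.IsPath (a :: w)) (hne : w ≠ []) : N.IsPath w := by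
  obtain ⟨_, hmem, hchain⟩ := hw
  exact ⟨hne, fun x hx => hmem x (List.mem_cons_of_mem _ hx), hchain.tail⟩

lemma getLast?_cons_of_ne_nil {w : List α} {a : α} (hne : w ≠ []) :
    (a :: w).getLast? = w.getLast? := by
  cases w with
  | nil => simp at hne
  | cons b l => simp [List.getLast?_cons_cons]

lemma head?_append_of_ne_nil {w l : List α} {a : α} (h : w.head? = some a) :
    (w ++ l).head? = some a := by
  rw [List.head?_append]; simp [h]

/-- In an acyclic net the endpoints of a flow edge are distinct. -/
lemma flow_ne (hacyc : N.Acyclic) {a b : α} (h : (a, b) ∈ N.flow) : a ≠ b := by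
  rintro rfl
  obtain ⟨ha, _⟩ := flow_mem_nodes h
  refine hacyc a ⟨[a, a], ⟨?_, ?_, ?_⟩, ?_, ?_, ?_⟩
  · simp
  · intro x hx; simp at hx; subst hx; exact ha
  · simp [List.Chain', List.isChain_cons_cons, h]
  · simp
  · simp
  · simp

lemma hasPath_of_isPath (hacyc : N.Acyclic) {w : List α} {x y : α} (hw : N.IsPath w)
    (h1 : w.head? = some x) (h2 : w.getLast? = some y) : N.HasAcyclicPath x y :=
  ⟨w, ⟨hw, hw.nodup hacyc⟩, h1, h2⟩

lemma hasPath_refl (hacyc : N.Acyclic) {x : α} (hx : x ∈ N.nodes) : N.HasAcyclicPath x x :=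
  hasPath_of_isPath hacyc (isPath_singleton hx) rfl rfl

lemma hasPath_edge (hacyc : N.Acyclic) {a b : α} (h : (a, b) ∈ N.flow) :
    N.HasAcyclicPath a b := by
  obtain ⟨ha, hb⟩ := flow_mem_nodes h
  have hp : N.IsPath [a, b] := ⟨by simp, by
    (intro x hx; simp at hx; rcases hx with rfl | rfl; exacts [ha, hb]),
    by simp [List.Chain', List.isChain_cons_cons, h]⟩
  exact hasPath_of_isPath hacyc hp (by simp) (by simp)

lemma hasPath_cons (hacyc : N.Acyclic) {z x y : α} (hf : (z, x) ∈ N.flow)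
    (h : N.HasAcyclicPath x y) : N.HasAcyclicPath z y := by
  obtain ⟨w, ⟨hw, _⟩, h1, h2⟩ := h
  refine hasPath_of_isPath hacyc (hw.cons h1 (flow_mem_nodes hf).1 hf) (by simp) ?_
  rw [getLast?_cons_of_ne_nil hw.1]; exact h2

/-- Decompose a path of length ≥ 2 from its last element. -/
lemma path_snoc_decomp {w : List α} {a b : α} (hw : N.IsPath w) (h1 : w.head? = some a)
    (h2 : w.getLast? = some b) (hlen : 2 ≤ w.length) :
    ∃ (w' : List α) (m : α), w = w' ++ [b] ∧ N.IsPath w' ∧ w'.head? = some a ∧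
      w'.getLast? = some m ∧ (m, b) ∈ N.flow := by
  have hne : w ≠ [] := hw.1
  have hw' : w.dropLast ++ [w.getLast hne] = w := List.dropLast_concat_getLast hne
  have hlast : w.getLast hne = b := by
    have := List.getLast?_eq_getLast hne
    rw [this] at h2; exact (Option.some.injEq _ _).mp h2
  rw [hlast] at hw'
  have hdne : w.dropLast ≠ [] := by
    intro h
    rw [h] at hw'; simp at hw'
    rw [← hw'] at hlen; simp at hlen
  obtain ⟨hne0, hmem, hchain⟩ := hw
  have hchain2 := hchain
  rw [← hw', List.Chain', List.isChain_append] at hchain2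
  obtain ⟨hc1, _, hc3⟩ := hchain2
  have hm : ∃ m, w.dropLast.getLast? = some m := by
    cases h : w.dropLast.getLast? with
    | none => exact absurd (List.getLast?_eq_none_iff.mp h) hdne
    | some m => exact ⟨m, rfl⟩
  obtain ⟨m, hm⟩ := hm
  refine ⟨w.dropLast, m, hw'.symm, ⟨hdne, ?_, hc1⟩, ?_, hm, ?_⟩
  · intro x hx; exact hmem x (by rw [← hw']; exact List.mem_append_left _ hx)
  · rw [← hw', List.head?_append] at h1
    cases hh : w.dropLast.head? with
    | none => exact absurd (List.head?_eq_none_iff.mp hh) hdne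
    | some c => rw [hh] at h1; simpa using h1
  · exact hc3 m hm b rfl

end PetriNet
namespace PetriNet

variable {α : Type} [DecidableEq α] {N : PetriNet α}

lemma chain_pred {R : α → α → Prop} :
    ∀ {w : List α} {x h : α}, List.Chain' R w → w.head? = some h → x ∈ w → x ≠ h →
      ∃ p ∈ w, R p x := by
  intro w
  induction w with
  | nil => intro x h _ _ hx _; simp at hx
  | cons b rest ih =>
    intro x h hchain hh hx hne
    simp only [List.head?_cons, Option.some.injEq] at hh
    subst hh
    rcases List.mem_cons.mp hx with rfl | hx
    · exact absurd rfl hne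
    · cases rest with
      | nil => simp at hx
      | cons c rest' =>
        rcases List.isChain_cons_cons.mp hchain with ⟨hbc, hchain'⟩
        by_cases hxc : x = c
        · subst hxc; exact ⟨b, by simp, hbc⟩
        · obtain ⟨p, hp, hR⟩ := ih hchain' rfl hx hxc
          exact ⟨p, List.mem_cons_of_mem _ hp, hR⟩

lemma chain_succ {R : α → α → Prop} :
    ∀ {w : List α} {x e : α}, List.Chain' R w → w.getLast? = some e → x ∈ w → x ≠ e →
      ∃ q ∈ w, R x q := by
  intro w
  induction w with
  | nil => intro x e _ _ hx _; simp at hx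
  | cons b rest ih =>
    intro x e hchain he hx hne
    cases rest with
    | nil =>
      simp at he hx
      exact absurd (hx.trans he) hne
    | cons c rest' =>
      rcases List.isChain_cons_cons.mp hchain with ⟨hbc, hchain'⟩
      rcases List.mem_cons.mp hx with rfl | hx
      · exact ⟨c, by simp, hbc⟩
      · rw [getLast?_cons_of_ne_nil (by simp)] at he
        obtain ⟨q, hq, hR⟩ := ih hchain' he hx hne
        exact ⟨q, List.mem_cons_of_mem _ hq, hR⟩

end PetriNet

namespace WorkflowNet

open PetriNet

variable {α : Type} [DecidableEq α] {W : WorkflowNet α}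

lemma trans_pre_nonempty {t : α} (ht : t ∈ W.transitions) :
    ∃ p, p ∈ W.toPetriNet.preset t := by
  obtain ⟨w, hw, hh, _, htw⟩ := W.all_on_path t (trans_mem_nodes ht)
  have hne : t ≠ W.source := by
    rintro rfl; exact not_place_and_trans W.source_mem ht
  obtain ⟨p, hp, hf⟩ := chain_pred hw.2.2 hh htw hne
  exact ⟨p, mem_preset'.mpr ⟨hw.2.1 p hp, hf⟩⟩

lemma trans_post_nonempty {t : α} (ht : t ∈ W.transitions) :
    ∃ p, p ∈ W.toPetriNet.postset t := by
  obtain ⟨w, hw, _, hl, htw⟩ := W.all_on_path t (trans_mem_nodes ht)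
  have hne : t ≠ W.sink := by
    rintro rfl; exact not_place_and_trans W.sink_mem ht
  obtain ⟨p, hp, hf⟩ := chain_succ hw.2.2 hl htw hne
  exact ⟨p, mem_postset'.mpr ⟨hw.2.1 p hp, hf⟩⟩

lemma reach_places {M : α → ℕ} (h : W.toPetriNet.Reachable W.initialMarking M) :
    ∀ x, x ∉ W.places → M x = 0 := by
  induction h with
  | refl =>
    intro x hx
    unfold WorkflowNet.initialMarking
    rw [if_neg]; rintro rfl; exact hx W.source_mem
  | tail _ hstep ih =>
    obtain ⟨t, hen, rfl⟩ := hstep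
    intro x hx
    unfold PetriNet.fire
    have hpost : x ∉ W.toPetriNet.postset t := fun hmem => hx (post_place hen.1 hmem)
    rw [if_neg hpost, ih x hx]
    simp

end WorkflowNet

namespace PetriNet

variable {α : Type} [DecidableEq α] {N : PetriNet α}

/-- The marking after firing the sequence `ts`. -/
def runEnd (N : PetriNet α) (M : α → ℕ) (ts : List α) : α → ℕ := ts.foldl N.fire M

/-- Validity of a firing sequence. -/
def ValidSeq (N : PetriNet α) : (α → ℕ) → List α → Prop
  | _, [] => True
  | M, t :: ts => N.Enabled M t ∧ N.ValidSeq (N.fire M t) ts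

@[simp] lemma runEnd_nil (M : α → ℕ) : N.runEnd M [] = M := rfl
@[simp] lemma runEnd_cons (M : α → ℕ) (t : α) (ts : List α) :
    N.runEnd M (t :: ts) = N.runEnd (N.fire M t) ts := rfl

lemma reach_run {M M' : α → ℕ} (h : N.Reachable M M') :
    ∃ ts, N.ValidSeq M ts ∧ N.runEnd M ts = M' := by
  induction h using Relation.ReflTransGen.head_induction_on with
  | refl => exact ⟨[], trivial, rfl⟩
  | head hstep _ ih =>
    obtain ⟨t, hen, rfl⟩ := hstep
    obtain ⟨ts, hv, hend⟩ := ih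
    exact ⟨t :: ts, ⟨hen, hv⟩, hend⟩

lemma run_reach {ts : List α} {M : α → ℕ} (h : N.ValidSeq M ts) :
    N.Reachable M (N.runEnd M ts) := by
  induction ts generalizing M with
  | nil => exact Relation.ReflTransGen.refl
  | cons t ts ih =>
    obtain ⟨hen, hv⟩ := h
    exact Relation.ReflTransGen.head ⟨t, hen, rfl⟩ (ih hv)

lemma extract_enabled {y s : α} (hys : ∀ t, t ∈ N.transitions → y ∈ N.preset t → t = s) :
    ∀ {ts : List α} {M : α → ℕ}, N.ValidSeq M ts → 1 ≤ M y → N.runEnd M ts y = 0 →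
    ∃ M', N.Reachable M M' ∧ N.Enabled M' s := by
  intro ts
  induction ts with
  | nil =>
    intro M _ hy h0
    simp only [runEnd_nil] at h0
    omega
  | cons t ts ih =>
    intro M hv hy h0
    obtain ⟨hen, hv'⟩ := hv
    by_cases hts : t = s
    · subst hts; exact ⟨M, Relation.ReflTransGen.refl, hen⟩
    · have hyp : y ∉ N.preset t := fun hmem => hts (hys t hen.1 hmem)
      have hy' : 1 ≤ N.fire M t y := by
        unfold fire; rw [if_neg hyp]; split <;> omega
      obtain ⟨M', hr, hs⟩ := ih hv' hy' h0
      exact ⟨M', Relation.ReflTransGen.head ⟨t, hen, rfl⟩ hr, hs⟩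

end PetriNet
namespace PetriNet

variable {α : Type} [DecidableEq α] {N : PetriNet α}

/-- All acyclic paths of the net, as a finite set. -/
noncomputable def univPaths (N : PetriNet α) : Finset (List α) :=
  ((N.nodes.toList.sublists.flatMap List.permutations).filter
    (fun w => @decide (N.IsPath w) (Classical.propDecidable _))).toFinset

lemma mem_univPaths {w : List α} : w ∈ N.univPaths ↔ N.IsPath w ∧ w.Nodup := by
  unfold univPaths
  rw [List.mem_toFinset, List.mem_filter]
  constructor
  · rintro ⟨hmem, hpath⟩
    have hpath' : N.IsPath w := @of_decide_eq_true (N.IsPath w) (Classical.propDecidable _) hpath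
    refine ⟨hpath', ?_⟩
    rw [List.mem_flatMap] at hmem
    obtain ⟨u, hu, hw⟩ := hmem
    have hperm : w.Perm u := List.mem_permutations.mp hw
    have hund : u.Nodup := (List.mem_sublists.mp hu).nodup N.nodes.nodup_toList
    exact hperm.nodup_iff.mpr hund
  · rintro ⟨hpath, hnodup⟩
    refine ⟨?_, @decide_eq_true (N.IsPath w) (Classical.propDecidable _) hpath⟩
    rw [List.mem_flatMap]
    refine ⟨N.nodes.toList.filter (fun x => x ∈ w), ?_, ?_⟩
    · exact List.mem_sublists.mpr List.filter_sublist
    · rw [List.mem_permutations]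
      apply List.perm_of_nodup_nodup_toFinset_eq hnodup
        (N.nodes.nodup_toList.filter _)
      ext x
      simp only [List.mem_toFinset, List.mem_filter, Finset.mem_toList, decide_eq_true_eq]
      exact ⟨fun hx => ⟨hpath.2.1 x hx, hx⟩, fun hx => hx.2⟩

/-- The number of acyclic paths starting at `x`. -/
noncomputable def pcount (N : PetriNet α) (x : α) : ℕ :=
  (N.univPaths.filter (fun w => w.head? = some x)).card

lemma singleton_mem_pcount (hacyc : N.Acyclic) {x : α} (hx : x ∈ N.nodes) :
    [x] ∈ N.univPaths.filter (fun w => w.head? = some x) := by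
  rw [Finset.mem_filter, mem_univPaths]
  exact ⟨⟨isPathSingleton, by simp⟩, by simp⟩
  where isPathSingleton := isPath_singleton hx

lemma sum_post_lt_pre (hacyc : N.Acyclic) {t z : α} (hz : z ∈ N.preset t) :
    ∑ u ∈ N.postset t, N.pcount u < N.pcount z := by
  obtain ⟨hzn, hzf⟩ := mem_preset'.mp hz
  have htn : t ∈ N.nodes := (flow_mem_nodes hzf).2
  classical
  set A := (N.postset t).biUnion
      (fun u => N.univPaths.filter (fun w => w.head? = some u)) with hA
  have hcard : A.card = ∑ u ∈ N.postset t, N.pcount u := by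
    rw [hA]
    apply Finset.card_biUnion
    intro u hu v hv huv
    simp only [Function.onFun]
    rw [Finset.disjoint_left]
    intro w hw hw'
    rw [Finset.mem_filter] at hw hw'
    rw [hw.2] at hw'
    exact huv (Option.some.injEq _ _ |>.mp hw'.2)
  have himg : ∀ w ∈ A, (z :: t :: w) ∈
      (N.univPaths.filter (fun w => w.head? = some z)).erase [z] := by
    intro w hw
    rw [hA, Finset.mem_biUnion] at hw
    obtain ⟨u, hu, hwu⟩ := hw
    rw [Finset.mem_filter, mem_univPaths] at hwu
    obtain ⟨⟨hwp, _⟩, hwh⟩ := hwu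
    obtain ⟨hun, huf⟩ := mem_postset'.mp hu
    have hp1 : N.IsPath (t :: w) := hwp.cons hwh htn huf
    have hp2 : N.IsPath (z :: t :: w) := hp1.cons (by simp) hzn hzf
    rw [Finset.mem_erase, Finset.mem_filter, mem_univPaths]
    exact ⟨by simp, ⟨hp2, hp2.nodup hacyc⟩, by simp⟩
  have hinj : Set.InjOn (fun w => z :: t :: w) A := by
    intro w1 _ w2 _ h
    simpa using h
  have hle := Finset.card_le_card_of_injOn _ himg hinj
  have hz1 : [z] ∈ N.univPaths.filter (fun w => w.head? = some z) :=
    singleton_mem_pcount hacyc hzn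
  have herase := Finset.card_erase_of_mem hz1
  have hpz : N.pcount z = (N.univPaths.filter (fun w => w.head? = some z)).card := rfl
  have hpos : 0 < (N.univPaths.filter (fun w => w.head? = some z)).card :=
    Finset.card_pos.mpr ⟨_, hz1⟩
  omega

/-- Weighted token count, strictly decreasing under firing. -/
noncomputable def weight (N : PetriNet α) (M : α → ℕ) : ℕ :=
  ∑ x ∈ N.nodes, M x * N.pcount x

lemma weight_fire_lt (hacyc : N.Acyclic) {M : α → ℕ} {t : α} (hen : N.Enabled M t)
    {z : α} (hz : z ∈ N.preset t) : N.weight (N.fire M t) < N.weight M := by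
  classical
  have hkey : ∀ x, N.fire M t x * N.pcount x +
      (if x ∈ N.preset t then 1 else 0) * N.pcount x =
      M x * N.pcount x + (if x ∈ N.postset t then 1 else 0) * N.pcount x := by
    intro x
    unfold fire
    by_cases hxp : x ∈ N.preset t
    · have h1 : 1 ≤ M x := hen.2 x hxp
      obtain ⟨k, hk⟩ : ∃ k, M x = k + 1 := ⟨M x - 1, by omega⟩
      rw [hk, if_pos hxp]
      simp only [Nat.add_sub_cancel]
      ring
    · rw [if_neg hxp]
      simp only [Nat.sub_zero]
      ring
  have hsum : N.weight (N.fire M t) + ∑ x ∈ N.preset t, N.pcount x =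
      N.weight M + ∑ x ∈ N.postset t, N.pcount x := by
    have hpre : N.preset t ⊆ N.nodes := Finset.filter_subset _ _
    have hpost : N.postset t ⊆ N.nodes := Finset.filter_subset _ _
    have e1 : ∑ x ∈ N.nodes, (if x ∈ N.preset t then 1 else 0) * N.pcount x =
        ∑ x ∈ N.preset t, N.pcount x := by
      simp only [ite_mul, one_mul, zero_mul]
      rw [← Finset.sum_filter, Finset.filter_mem_eq_inter, Finset.inter_eq_right.mpr hpre]
    have e2 : ∑ x ∈ N.nodes, (if x ∈ N.postset t then 1 else 0) * N.pcount x =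
        ∑ x ∈ N.postset t, N.pcount x := by
      simp only [ite_mul, one_mul, zero_mul]
      rw [← Finset.sum_filter, Finset.filter_mem_eq_inter, Finset.inter_eq_right.mpr hpost]
    rw [← e1, ← e2]
    unfold weight
    rw [← Finset.sum_add_distrib, ← Finset.sum_add_distrib]
    exact Finset.sum_congr rfl (fun x _ => hkey x)
  have hlt : ∑ x ∈ N.postset t, N.pcount x < ∑ x ∈ N.preset t, N.pcount x := by
    calc ∑ x ∈ N.postset t, N.pcount x < N.pcount z := sum_post_lt_pre hacyc hz
    _ ≤ ∑ x ∈ N.preset t, N.pcount x :=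
        Finset.single_le_sum (fun _ _ => Nat.zero_le _) hz
  omega

end PetriNet
namespace PetriNet

variable {α : Type} [DecidableEq α] {N : PetriNet α}

lemma no_two_cycle (hacyc : N.Acyclic) {a b : α} (h1 : (a, b) ∈ N.flow)
    (h2 : (b, a) ∈ N.flow) : False := by
  obtain ⟨ha, hb⟩ := flow_mem_nodes h1
  refine hacyc a ⟨[a, b, a], ⟨?_, ?_, ?_⟩, ?_, ?_, ?_⟩
  · simp
  · intro x hx; simp at hx; rcases hx with rfl | rfl | rfl; exacts [ha, hb, ha]
  · simp [List.Chain', List.isChain_cons_cons, h1, h2]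
  · simp
  · simp
  · simp

lemma two_le_length_of_head_ne_last {l : List α} {x y : α} (h1 : l.head? = some x)
    (h2 : l.getLast? = some y) (hne : x ≠ y) : 2 ≤ l.length := by
  cases l with
  | nil => simp at h1
  | cons a rest =>
    cases rest with
    | nil =>
      simp at h1 h2
      exact absurd (h1.symm.trans h2) hne
    | cons c rest' => simp

lemma length_le_one_of_nodup_head_eq_last {l : List α} (h : l.Nodup) {a : α}
    (h1 : l.head? = some a) (h2 : l.getLast? = some a) : l.length ≤ 1 := by
  cases l with
  | nil => simp
  | cons b rest =>
    cases rest with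
    | nil => simp
    | cons c rest' =>
      exfalso
      simp only [List.head?_cons, Option.some.injEq] at h1
      rw [getLast?_cons_of_ne_nil (by simp)] at h2
      have hne : (c :: rest') ≠ [] := by simp
      rw [List.getLast?_eq_getLast hne] at h2
      have hmem : a ∈ c :: rest' := (Option.some.inj h2) ▸ List.getLast_mem hne
      exact (List.nodup_cons.mp h).1 (by rw [h1]; exact hmem)

lemma fire_ge_of_not_pre {M : α → ℕ} {t p : α} (h : p ∉ N.preset t) :
    M p ≤ N.fire M t p := by
  unfold fire; rw [if_neg h]; split <;> omega

lemma fire_eq_add_one {M : α → ℕ} {t p : α} (hpost : p ∈ N.postset t)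
    (hpre : p ∉ N.preset t) : N.fire M t p = M p + 1 := by
  unfold fire; rw [if_neg hpre, if_pos hpost]; omega

lemma fire_pre_ge {M : α → ℕ} {t p : α} (hen : N.Enabled M t) (hpre : p ∈ N.preset t) :
    M p - 1 ≤ N.fire M t p := by
  unfold fire; rw [if_pos hpre]; split <;> omega

end PetriNet

namespace WorkflowNet

open PetriNet

variable {α : Type} [DecidableEq α] {W : WorkflowNet α}

/-- A marking is bad if it puts tokens on both endpoints of a nontrivial path,
or two tokens on one node. -/
def Bad (W : WorkflowNet α) (M : α → ℕ) : Prop :=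
  (∃ a b w, 1 ≤ M a ∧ 1 ≤ M b ∧ W.toPetriNet.IsPath w ∧ w.head? = some a ∧
    w.getLast? = some b ∧ 2 ≤ w.length) ∨ (∃ a, 2 ≤ M a)

lemma noBad (hfc : W.toPetriNet.FreeChoice) (hacyc : W.toPetriNet.Acyclic)
    (hsound : W.Sound) :
    ∀ n M, W.toPetriNet.weight M = n →
      W.toPetriNet.Reachable W.initialMarking M → ¬ W.Bad M := by
  intro n
  induction n using Nat.strong_induction_on with
  | _ n ih =>
  intro M hn hreach hbad
  -- recursion helper
  have step : ∀ (t : α) (M₁ : α → ℕ), W.toPetriNet.Step M t M₁ →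
      W.Bad M₁ → False := by
    rintro t M₁ ⟨hen, rfl⟩ hb1
    obtain ⟨z, hz⟩ := trans_pre_nonempty hen.1
    exact ih _ (hn ▸ weight_fire_lt hacyc hen hz) _ rfl
      (hreach.tail ⟨t, hen, rfl⟩) hb1
  have hMo := (hsound.1 M hreach).1
  by_cases hMoeq : M = W.terminalMarking
  · -- terminal marking is not bad
    subst hMoeq
    rcases hbad with ⟨a, b, w, ha, hb, hw, hwh, hwl, hlen⟩ | ⟨a, ha⟩
    · have ha' : a = W.sink := by
        by_contra h
        unfold WorkflowNet.terminalMarking at ha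
        rw [if_neg h] at ha; omega
      have hb' : b = W.sink := by
        by_contra h
        unfold WorkflowNet.terminalMarking at hb
        rw [if_neg h] at hb; omega
      subst ha'; subst hb'
      have := length_le_one_of_nodup_head_eq_last (hw.nodup hacyc) hwh hwl
      omega
    · unfold WorkflowNet.terminalMarking at ha
      split at ha <;> omega
  · obtain heq | ⟨M₁', ⟨t₁, hstep1⟩, _⟩ := Relation.ReflTransGen.cases_head hMo
    · exact hMoeq heq
    obtain ⟨hen1, rfl⟩ := hstep1
    have ht₁tr : t₁ ∈ W.transitions := hen1.1
    rcases hbad with ⟨a, b, w, ha, hb, hw, hwh, hwl, hlen⟩ | ⟨a, ha2⟩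
    · -- a bad pair along path w
      have hwnd : w.Nodup := hw.nodup hacyc
      have hapl : a ∈ W.places := by
        by_contra h; rw [reach_places hreach a h] at ha; omega
      have hbpl : b ∈ W.places := by
        by_contra h; rw [reach_places hreach b h] at hb; omega
      have hab : a ≠ b := by
        rintro rfl
        have := length_le_one_of_nodup_head_eq_last hwnd hwh hwl
        omega
      -- decompose w = a :: s₂ :: w₃
      obtain ⟨w₂, rfl⟩ : ∃ w₂, w = a :: w₂ := by
        cases w with
        | nil => simp at hwh
        | cons a0 w₂ =>
          simp only [List.head?_cons, Option.some.injEq] at hwh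
          exact ⟨w₂, by rw [hwh]⟩
      obtain ⟨s₂, w₃, rfl⟩ : ∃ s₂ w₃, w₂ = s₂ :: w₃ := by
        cases w₂ with
        | nil => simp at hlen
        | cons s₂ w₃ => exact ⟨s₂, w₃, rfl⟩
      have has₂ : (a, s₂) ∈ W.flow := (List.isChain_cons_cons.mp hw.2.2).1
      have hs₂tr : s₂ ∈ W.transitions := flow_trans_of_place hapl has₂
      have hwl' : (s₂ :: w₃).getLast? = some b := by
        rwa [getLast?_cons_of_ne_nil (by simp)] at hwl
      by_cases hbt : b ∈ W.toPetriNet.preset t₁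
      · -- t₁ consumes b : extend the path through t₁
        have hbt₁f : (b, t₁) ∈ W.flow := (mem_preset'.mp hbt).2
        have hanot : a ∉ W.toPetriNet.preset t₁ := by
          intro hat
          have hat₁f : (a, t₁) ∈ W.flow := (mem_preset'.mp hat).2
          by_cases ht₁s : t₁ = s₂
          · subst ht₁s
            -- cycle through t₁
            have hp1 : W.toPetriNet.IsPath (t₁ :: w₃) := hw.tail (by simp)
            have hp2 : W.toPetriNet.IsPath ((t₁ :: w₃) ++ [t₁]) :=
              hp1.concat hwl' (trans_mem_nodes ht₁tr) hbt₁f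
            exact hacyc t₁ ⟨(t₁ :: w₃) ++ [t₁], hp2,
              by simp, head?_append_of_ne_nil rfl,
              by rw [List.getLast?_concat]⟩
          · have hcard : 1 < (W.toPetriNet.postset a).card := by
              rw [Finset.one_lt_card]
              exact ⟨t₁, mem_postset'.mpr ⟨trans_mem_nodes ht₁tr, hat₁f⟩,
                s₂, mem_postset'.mpr ⟨trans_mem_nodes hs₂tr, has₂⟩,
                ht₁s⟩
            have hpre := hfc a hapl hcard t₁
              (mem_postset'.mpr ⟨trans_mem_nodes ht₁tr, hat₁f⟩)
            rw [hpre] at hbt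
            simp at hbt
            exact hab hbt.symm
        obtain ⟨u, hu⟩ := trans_post_nonempty ht₁tr
        have ht₁uf : (t₁, u) ∈ W.flow := (mem_postset'.mp hu).2
        have hunp : u ∉ W.toPetriNet.preset t₁ := by
          intro h
          exact no_two_cycle hacyc ht₁uf (mem_preset'.mp h).2
        have hp1 : W.toPetriNet.IsPath ((a :: s₂ :: w₃) ++ [t₁]) :=
          hw.concat hwl (trans_mem_nodes ht₁tr) hbt₁f
        have hp2 : W.toPetriNet.IsPath (((a :: s₂ :: w₃) ++ [t₁]) ++ [u]) :=
          hp1.concat (by rw [List.getLast?_concat]) (mem_postset'.mp hu).1 ht₁uf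
        apply step t₁ _ ⟨hen1, rfl⟩
        left
        refine ⟨a, u, ((a :: s₂ :: w₃) ++ [t₁]) ++ [u], ?_, ?_, hp2, ?_, ?_, ?_⟩
        · exact le_trans ha (fire_ge_of_not_pre hanot)
        · rw [fire_eq_add_one hu hunp]; omega
        · exact head?_append_of_ne_nil (head?_append_of_ne_nil rfl)
        · rw [List.getLast?_concat]
        · simp
      · by_cases hat : a ∈ W.toPetriNet.preset t₁
        · -- t₁ consumes a : fire s₂ instead (free choice), push pair forward
          have hat₁f : (a, t₁) ∈ W.flow := (mem_preset'.mp hat).2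
          have hen₂ : W.toPetriNet.Enabled M s₂ ∧ b ∉ W.toPetriNet.preset s₂ := by
            by_cases ht₁s : t₁ = s₂
            · subst ht₁s
              exact ⟨hen1, hbt⟩
            · have hcard : 1 < (W.toPetriNet.postset a).card := by
                rw [Finset.one_lt_card]
                exact ⟨t₁, mem_postset'.mpr ⟨trans_mem_nodes ht₁tr, hat₁f⟩,
                  s₂, mem_postset'.mpr ⟨trans_mem_nodes hs₂tr, has₂⟩,
                  ht₁s⟩
              have hpre := hfc a hapl hcard s₂
                (mem_postset'.mpr ⟨trans_mem_nodes hs₂tr, has₂⟩)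
              refine ⟨⟨hs₂tr, ?_⟩, ?_⟩
              · intro p hp; rw [hpre] at hp; simp at hp; subst hp; exact ha
              · rw [hpre]; simp; exact fun h => hab h.symm
            -- in the t₁ = s₂ case b ∉ preset s₂ is hbt
          obtain ⟨hen₂, hbs₂⟩ := hen₂
          -- w₃ is nonempty since its last element b is a place
          obtain ⟨p₂, w₄, rfl⟩ : ∃ p₂ w₄, w₃ = p₂ :: w₄ := by
            cases w₃ with
            | nil =>
              simp at hwl'
              exact absurd hwl' (fun h => not_place_and_trans (h ▸ hbpl) hs₂tr)
            | cons p₂ w₄ => exact ⟨p₂, w₄, rfl⟩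
          have hs₂p₂ : (s₂, p₂) ∈ W.flow := (List.isChain_cons_cons.mp (hw.tail (by simp)).2.2).1
          have hp₂post : p₂ ∈ W.toPetriNet.postset s₂ :=
            mem_postset'.mpr ⟨hw.2.1 p₂ (by simp), hs₂p₂⟩
          have hp₂np : p₂ ∉ W.toPetriNet.preset s₂ := by
            intro h
            exact no_two_cycle hacyc hs₂p₂ (mem_preset'.mp h).2
          apply step s₂ _ ⟨hen₂, rfl⟩
          have hwl'' : (p₂ :: w₄).getLast? = some b := by
            rwa [getLast?_cons_of_ne_nil (by simp)] at hwl'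
          by_cases hp₂b : p₂ = b
          · subst hp₂b
            right
            refine ⟨p₂, ?_⟩
            rw [fire_eq_add_one hp₂post hp₂np]
            omega
          · left
            refine ⟨p₂, b, p₂ :: w₄, ?_, ?_, (hw.tail (by simp)).tail (by simp), by simp,
              hwl'', ?_⟩
            · rw [fire_eq_add_one hp₂post hp₂np]; omega
            · exact le_trans hb (fire_ge_of_not_pre hbs₂)
            · exact two_le_length_of_head_ne_last (by simp) hwl'' hp₂b
        · -- t₁ consumes neither a nor b
          apply step t₁ _ ⟨hen1, rfl⟩
          left
          exact ⟨a, b, a :: s₂ :: w₃, le_trans ha (fire_ge_of_not_pre hat),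
            le_trans hb (fire_ge_of_not_pre hbt), hw, rfl, hwl, hlen⟩
    · -- two tokens on a
      by_cases hat : a ∈ W.toPetriNet.preset t₁
      · have hat₁f : (a, t₁) ∈ W.flow := (mem_preset'.mp hat).2
        obtain ⟨u, hu⟩ := trans_post_nonempty ht₁tr
        have ht₁uf : (t₁, u) ∈ W.flow := (mem_postset'.mp hu).2
        have hunp : u ∉ W.toPetriNet.preset t₁ := by
          intro h
          exact no_two_cycle hacyc ht₁uf (mem_preset'.mp h).2
        apply step t₁ _ ⟨hen1, rfl⟩
        left
        refine ⟨a, u, [a, t₁, u], ?_, ?_, ⟨by simp, ?_, by simp [List.Chain', List.isChain_cons_cons, hat₁f, ht₁uf]⟩,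
          by simp, by simp, by simp⟩
        · have := fire_pre_ge (N := W.toPetriNet) (M := M) hen1 hat
          omega
        · rw [fire_eq_add_one hu hunp]; omega
        · intro x hx; simp at hx
          rcases hx with rfl | rfl | rfl
          exacts [(mem_preset'.mp hat).1, trans_mem_nodes ht₁tr, (mem_postset'.mp hu).1]
      · apply step t₁ _ ⟨hen1, rfl⟩
        right
        exact ⟨a, le_trans ha2 (fire_ge_of_not_pre hat)⟩

end WorkflowNet
namespace PetriNet

variable {α : Type} [DecidableEq α] {N : PetriNet α}

lemma extract_prefix {y s : α} (hys : ∀ t, t ∈ N.transitions → y ∈ N.preset t → t = s) :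
    ∀ {ts : List α} {M : α → ℕ}, N.ValidSeq M ts → 1 ≤ M y → N.runEnd M ts y = 0 →
    ∃ ts₁, N.ValidSeq M ts₁ ∧ N.Enabled (N.runEnd M ts₁) s := by
  intro ts
  induction ts with
  | nil =>
    intro M _ hy h0
    simp only [runEnd_nil] at h0
    omega
  | cons t ts ih =>
    intro M hv hy h0
    obtain ⟨hen, hv'⟩ := hv
    by_cases hts : t = s
    · subst hts; exact ⟨[], trivial, hen⟩
    · have hyp : y ∉ N.preset t := fun hmem => hts (hys t hen.1 hmem)
      have hy' : 1 ≤ N.fire M t y := le_trans hy (fire_ge_of_not_pre hyp)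
      obtain ⟨ts₁, hvs, hens⟩ := ih hv' hy' h0
      exact ⟨t :: ts₁, ⟨hen, hvs⟩, hens⟩

lemma run_no_consume {x : α} :
    ∀ {ts : List α} {M : α → ℕ}, N.ValidSeq M ts → (∀ t ∈ ts, x ∉ N.preset t) →
      M x ≤ N.runEnd M ts x := by
  intro ts
  induction ts with
  | nil => intro M _ _; simp
  | cons t ts ih =>
    intro M hv hnc
    obtain ⟨hen, hv'⟩ := hv
    calc M x ≤ N.fire M t x := fire_ge_of_not_pre (hnc t (by simp))
    _ ≤ _ := ih hv' (fun t' ht' => hnc t' (List.mem_cons_of_mem _ ht'))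

lemma project_run (rel : α → Prop) (keep : α → Bool)
    (hkeep : ∀ t, keep t = true → ∀ p, p ∈ N.preset t → rel p)
    (hdrop : ∀ t, keep t = false → ∀ p, p ∈ N.postset t → ¬ rel p) :
    ∀ (ts : List α) (M Nv : α → ℕ), N.ValidSeq M ts →
      (∀ p, rel p → M p ≤ Nv p) →
      N.ValidSeq Nv (ts.filter keep) ∧
      ∀ p, rel p → N.runEnd M ts p ≤ N.runEnd Nv (ts.filter keep) p := by
  intro ts
  induction ts with
  | nil => intro M Nv _ h; exact ⟨trivial, fun p hp => by simpa using h p hp⟩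
  | cons t ts ih =>
    intro M Nv hv hle
    obtain ⟨hen, hv'⟩ := hv
    by_cases hk : keep t = true
    · rw [List.filter_cons_of_pos hk]
      have henN : N.Enabled Nv t :=
        ⟨hen.1, fun p hp => le_trans (hen.2 p hp) (hle p (hkeep t hk p hp))⟩
      have hle' : ∀ p, rel p → N.fire M t p ≤ N.fire Nv t p := by
        intro p hp
        have h0 := hle p hp
        unfold fire
        by_cases hpre : p ∈ N.preset t
        · have h1 := hen.2 p hpre
          rw [if_pos hpre]
          split <;> omega
        · rw [if_neg hpre]
          split <;> omega
      obtain ⟨hv2, hend⟩ := ih (N.fire M t) (N.fire Nv t) hv' hle'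
      exact ⟨⟨henN, hv2⟩, hend⟩
    · rw [List.filter_cons_of_neg (by simpa using hk)]
      have hle' : ∀ p, rel p → N.fire M t p ≤ Nv p := by
        intro p hp
        have hnp : p ∉ N.postset t :=
          fun hmem => hdrop t (by simpa using hk) p hmem hp
        have h0 := hle p hp
        unfold fire
        rw [if_neg hnp]
        split <;> omega
      exact ih (N.fire M t) Nv hv' hle'

lemma replay_run {x : α} :
    ∀ (ts : List α) (M₂ Mv : α → ℕ),
      N.ValidSeq M₂ ts →
      (∀ t ∈ ts, ∀ p, p ∈ N.preset t → p ∉ N.postset x) →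
      (∀ p, M₂ p + (if p ∈ N.preset x then 1 else 0) =
        Mv p + (if p ∈ N.postset x then 1 else 0)) →
      N.ValidSeq Mv ts ∧
      ∀ p, N.runEnd M₂ ts p + (if p ∈ N.preset x then 1 else 0) =
        N.runEnd Mv ts p + (if p ∈ N.postset x then 1 else 0) := by
  intro ts
  induction ts with
  | nil => exact fun M₂ Mv _ _ h => ⟨trivial, by simpa using h⟩
  | cons t ts ih =>
    intro M₂ Mv hv hnc hinv
    obtain ⟨hen, hv'⟩ := hv
    have henv : N.Enabled Mv t := by
      refine ⟨hen.1, fun p hp => ?_⟩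
      have h1 := hen.2 p hp
      have h2 := hinv p
      have h3 : p ∉ N.postset x := hnc t (by simp) p hp
      rw [if_neg h3] at h2
      split at h2 <;> omega
    have hinv' : ∀ p, N.fire M₂ t p + (if p ∈ N.preset x then 1 else 0) =
        N.fire Mv t p + (if p ∈ N.postset x then 1 else 0) := by
      intro p
      have h2 := hinv p
      unfold fire
      by_cases hpt : p ∈ N.preset t
      · have ha := hen.2 p hpt
        have hb := henv.2 p hpt
        simp only [if_pos hpt]
        split_ifs at h2 ⊢ <;> omega
      · simp only [if_neg hpt]
        split_ifs at h2 ⊢ <;> omega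
    obtain ⟨h1, h2⟩ := ih _ _ hv' (fun t' ht' => hnc t' (List.mem_cons_of_mem _ ht')) hinv'
    exact ⟨⟨henv, h1⟩, h2⟩

end PetriNet

namespace WorkflowNet

open PetriNet

variable {α : Type} [DecidableEq α] {W : WorkflowNet α}

/-- Key construction: a reachable marking where `x` stays active and `s` is enabled. -/
lemma enable_with_active (hfc : W.toPetriNet.FreeChoice) (hacyc : W.toPetriNet.Acyclic)
    (hsound : W.Sound) {M : α → ℕ} {x y s : α}
    (hreach : W.toPetriNet.Reachable W.initialMarking M)
    (hx : W.toPetriNet.Active x M) (hy : 1 ≤ M y) (hypl : y ∈ W.places)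
    (hs : s ∈ W.toPetriNet.postset y) (hstr : s ∈ W.transitions)
    (hnp : ¬ W.toPetriNet.HasAcyclicPath x s)
    (hxy : x ∈ W.transitions → y ∉ W.toPetriNet.preset x) :
    ∃ M', W.toPetriNet.Reachable W.initialMarking M' ∧
      W.toPetriNet.Active x M' ∧ W.toPetriNet.Enabled M' s := by
  classical
  by_cases hys : W.toPetriNet.postset y = {s}
  · -- only s consumes y; follow a completing run
    have hysink : y ≠ W.sink := by
      rintro rfl
      rw [W.sink_no_post] at hs
      exact absurd hs (Finset.notMem_empty s)
    have hyss : ∀ t, t ∈ W.transitions → y ∈ W.toPetriNet.preset t → t = s := by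
      intro t ht hyt
      have : t ∈ W.toPetriNet.postset y :=
        mem_postset'.mpr ⟨trans_mem_nodes ht, (mem_preset'.mp hyt).2⟩
      rw [hys] at this
      simpa using this
    -- projection data
    set keep : α → Bool := fun t => @decide (W.toPetriNet.HasAcyclicPath t s)
      (Classical.propDecidable _) with hkeepdef
    have hkeep : ∀ t, keep t = true → ∀ p, p ∈ W.toPetriNet.preset t →
        W.toPetriNet.HasAcyclicPath p s := by
      intro t ht p hp
      have hts : W.toPetriNet.HasAcyclicPath t s := of_decide_eq_true ht
      exact hasPath_cons hacyc (mem_preset'.mp hp).2 hts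
    have hdrop : ∀ t, keep t = false → ∀ p, p ∈ W.toPetriNet.postset t →
        ¬ W.toPetriNet.HasAcyclicPath p s := by
      intro t ht p hp hps
      have : W.toPetriNet.HasAcyclicPath t s :=
        hasPath_cons hacyc (mem_postset'.mp hp).2 hps
      rw [hkeepdef] at ht
      simp only [decide_eq_false_iff_not] at ht
      exact ht this
    have hrels : ∀ p, p ∈ W.toPetriNet.preset s → W.toPetriNet.HasAcyclicPath p s :=
      fun p hp => hasPath_edge hacyc (mem_preset'.mp hp).2
    rcases hx with ⟨hxpl, hxm⟩ | ⟨hxtr, hxen⟩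
    · -- x is a marked place
      obtain ⟨ts, hv, hend⟩ := reach_run ((hsound.1 M hreach).1)
      have hy0 : W.toPetriNet.runEnd M ts y = 0 := by
        rw [hend]; unfold WorkflowNet.terminalMarking; rw [if_neg hysink]
      obtain ⟨ts₁, hv₁, hen₁⟩ := extract_prefix hyss hv hy hy0
      obtain ⟨hv₂, hle₂⟩ := project_run _ keep hkeep hdrop ts₁ M M hv₁ (fun p _ => le_refl _)
      refine ⟨_, hreach.trans (run_reach hv₂), Or.inl ⟨hxpl, ?_⟩, ⟨hstr, fun p hp => ?_⟩⟩
      · -- x stays marked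
        refine le_trans hxm (run_no_consume hv₂ ?_)
        intro t ht hxt
        rw [List.mem_filter] at ht
        exact hnp (hasPath_cons hacyc (mem_preset'.mp hxt).2 (of_decide_eq_true ht.2))
      · exact le_trans (hen₁.2 p hp) (hle₂ p (hrels p hp))
    · -- x is an enabled transition: fire x virtually, project, replay
      have hynx : y ∉ W.toPetriNet.preset x := hxy hxtr
      have hstep : W.toPetriNet.Step M x (W.toPetriNet.fire M x) := ⟨⟨hxtr, hxen.2⟩, rfl⟩
      set M₂ := W.toPetriNet.fire M x with hM₂
      have hreach₂ : W.toPetriNet.Reachable W.initialMarking M₂ := hreach.tail ⟨x, hstep⟩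
      have hy₂ : 1 ≤ M₂ y := le_trans hy (fire_ge_of_not_pre hynx)
      obtain ⟨ts, hv, hend⟩ := reach_run ((hsound.1 M₂ hreach₂).1)
      have hy0 : W.toPetriNet.runEnd M₂ ts y = 0 := by
        rw [hend]; unfold WorkflowNet.terminalMarking; rw [if_neg hysink]
      obtain ⟨ts₁, hv₁, hen₁⟩ := extract_prefix hyss hv hy₂ hy0
      obtain ⟨hv₂, hle₂⟩ := project_run _ keep hkeep hdrop ts₁ M₂ M₂ hv₁ (fun p _ => le_refl _)
      -- replay the projected run from M instead of M₂
      have hnc : ∀ t ∈ ts₁.filter keep, ∀ p, p ∈ W.toPetriNet.preset t →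
          p ∉ W.toPetriNet.postset x := by
        intro t ht p hp hpx
        rw [List.mem_filter] at ht
        exact hnp (hasPath_cons hacyc (mem_postset'.mp hpx).2
          (hasPath_cons hacyc (mem_preset'.mp hp).2 (of_decide_eq_true ht.2)))
      have hinv : ∀ p, M₂ p + (if p ∈ W.toPetriNet.preset x then 1 else 0) =
          M p + (if p ∈ W.toPetriNet.postset x then 1 else 0) := by
        intro p
        rw [hM₂]
        unfold PetriNet.fire
        by_cases hp : p ∈ W.toPetriNet.preset x
        · have := hxen.2 p hp
          simp only [if_pos hp]
          split_ifs <;> omega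
        · simp only [if_neg hp]
          split_ifs <;> omega
      obtain ⟨hv₃, hinv₃⟩ := replay_run (ts₁.filter keep) M₂ M hv₂ hnc hinv
      refine ⟨_, hreach.trans (run_reach hv₃), Or.inr ⟨hxtr, hxtr, fun p hp => ?_⟩,
        hstr, fun p hp => ?_⟩
      · -- x enabled at the end
        have h2 := hinv₃ p
        have hppx : p ∉ W.toPetriNet.postset x := by
          intro hmem
          exact no_two_cycle hacyc (mem_postset'.mp hmem).2 (mem_preset'.mp hp).2
        rw [if_pos hp, if_neg hppx] at h2
        omega
      · -- s enabled at the end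
        have h2 := hinv₃ p
        have hppx : p ∉ W.toPetriNet.postset x := by
          intro hmem
          exact hnp (hasPath_cons hacyc (mem_postset'.mp hmem).2 (hrels p hp))
        rw [if_neg hppx] at h2
        have h3 : 1 ≤ W.toPetriNet.runEnd M₂ (ts₁.filter keep) p :=
          le_trans (hen₁.2 p hp) (hle₂ p (hrels p hp))
        split at h2 <;> omega
  · -- free choice: s is enabled already
    have hcard : 1 < (W.toPetriNet.postset y).card := by
      rw [Finset.one_lt_card]
      have : ∃ u ∈ W.toPetriNet.postset y, u ≠ s := by
        by_contra h
        push_neg at h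
        exact hys (Finset.eq_singleton_iff_unique_mem.mpr ⟨hs, h⟩)
      obtain ⟨u, hu, hus⟩ := this
      exact ⟨u, hu, s, hs, hus⟩
    have hpre := hfc y hypl hcard s hs
    refine ⟨M, hreach, hx, hstr, fun p hp => ?_⟩
    rw [hpre] at hp
    simp at hp
    subst hp
    exact hy

end WorkflowNet
namespace PetriNet

variable {α : Type} [DecidableEq α] {N : PetriNet α} {M₀ : α → ℕ}

lemma concStep_mono {R R' : Set (α × α)} (h : R ⊆ R') :
    N.concStep M₀ R ⊆ N.concStep M₀ R' := by
  intro q hq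
  obtain ⟨h1, h2, h3, h4, h5⟩ := hq
  exact ⟨h1, h2, fun ha hb z hz => h (h3 ha hb z hz),
    fun ha hb z hz => h (h4 ha hb z hz),
    fun ha hb z hz z' hz' => h (h5 ha hb z hz z' hz')⟩

lemma conc_sub {q : α × α} (hq : q ∈ N.Concurrent M₀) : q ∈ N.concStep M₀ (N.Concurrent M₀) := by
  obtain ⟨R, hR, hqR⟩ := hq
  exact concStep_mono (fun p hp => Set.mem_sUnion.mpr ⟨R, hR, hp⟩) (hR hqR)

lemma conc_ne {a b : α} (h : (a, b) ∈ N.Concurrent M₀) : a ≠ b := (conc_sub h).1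

lemma conc_marking {a b : α} (h : (a, b) ∈ N.Concurrent M₀) :
    ∃ M, N.Reachable M₀ M ∧ N.Active a M ∧ N.Active b M := (conc_sub h).2.1

lemma conc_TP {a b : α} (h : (a, b) ∈ N.Concurrent M₀) (ha : a ∈ N.transitions)
    (hb : b ∈ N.places) : ∀ z ∈ N.preset a, (z, b) ∈ N.Concurrent M₀ :=
  (conc_sub h).2.2.1 ha hb

lemma conc_PT {a b : α} (h : (a, b) ∈ N.Concurrent M₀) (ha : a ∈ N.places)
    (hb : b ∈ N.transitions) : ∀ z ∈ N.preset b, (z, a) ∈ N.Concurrent M₀ :=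
  (conc_sub h).2.2.2.1 ha hb

lemma conc_TT {a b : α} (h : (a, b) ∈ N.Concurrent M₀) (ha : a ∈ N.transitions)
    (hb : b ∈ N.transitions) :
    ∀ z ∈ N.preset a, ∀ z' ∈ N.preset b, (z, z') ∈ N.Concurrent M₀ :=
  (conc_sub h).2.2.2.2 ha hb

lemma active_place {M : α → ℕ} {a : α} (h : N.Active a M) (ha : a ∈ N.places) : 1 ≤ M a := by
  rcases h with ⟨_, h2⟩ | ⟨htr, _⟩
  · exact h2
  · exact (not_place_and_trans ha htr).elim

lemma active_trans {M : α → ℕ} {a : α} (h : N.Active a M) (ha : a ∈ N.transitions) :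
    N.Enabled M a := by
  rcases h with ⟨hpl, _⟩ | ⟨_, h2⟩
  · exact (not_place_and_trans hpl ha).elim
  · exact h2

end PetriNet

namespace WorkflowNet

open PetriNet

variable {α : Type} [DecidableEq α] {W : WorkflowNet α}

/-- Two distinct places marked in a common reachable marking are concurrent. -/
lemma places_conc {p q : α} (hp : p ∈ W.places) (hq : q ∈ W.places) (hne : p ≠ q)
    {M : α → ℕ} (hreach : W.toPetriNet.Reachable W.initialMarking M)
    (h1 : 1 ≤ M p) (h2 : 1 ≤ M q) :
    (p, q) ∈ W.toPetriNet.Concurrent W.initialMarking := by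
  refine Set.mem_sUnion.mpr ⟨{r : α × α | r.1 ≠ r.2 ∧ r.1 ∈ W.places ∧ r.2 ∈ W.places ∧
    ∃ M, W.toPetriNet.Reachable W.initialMarking M ∧ 1 ≤ M r.1 ∧ 1 ≤ M r.2}, ?_,
    ⟨hne, hp, hq, M, hreach, h1, h2⟩⟩
  rintro ⟨a, b⟩ ⟨hne', hapl, hbpl, M', hr', ha', hb'⟩
  refine ⟨hne', ⟨M', hr', Or.inl ⟨hapl, ha'⟩, Or.inl ⟨hbpl, hb'⟩⟩, ?_, ?_, ?_⟩
  · intro htr; exact (not_place_and_trans hapl htr).elim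
  · intro _ htr; exact (not_place_and_trans hbpl htr).elim
  · intro htr; exact (not_place_and_trans hapl htr).elim

/-- Concurrent nodes are unordered. -/
lemma conc_no_path (hfc : W.toPetriNet.FreeChoice) (hacyc : W.toPetriNet.Acyclic)
    (hsound : W.Sound) {a b : α}
    (h : (a, b) ∈ W.toPetriNet.Concurrent W.initialMarking) :
    ¬ W.toPetriNet.HasAcyclicPath a b := by
  have key : ∀ {M : α → ℕ} {u v : α}, W.toPetriNet.Reachable W.initialMarking M →
      1 ≤ M u → 1 ≤ M v → W.toPetriNet.HasAcyclicPath u v → u ≠ v → False := by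
    intro M u v hreach hu hv hpath hne
    obtain ⟨w, ⟨hw, _⟩, hwh, hwl⟩ := hpath
    exact noBad hfc hacyc hsound _ M rfl hreach
      (Or.inl ⟨u, v, w, hu, hv, hw, hwh, hwl,
        two_le_length_of_head_ne_last hwh hwl hne⟩)
  intro hpath
  obtain ⟨w, ⟨hw, hnd⟩, hwh, hwl⟩ := hpath
  have hab : a ≠ b := conc_ne h
  have hlen : 2 ≤ w.length := two_le_length_of_head_ne_last hwh hwl hab
  obtain ⟨w', m, hwe, hw', hw'h, hw'l, hmb⟩ := path_snoc_decomp hw hwh hwl hlen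
  obtain ⟨Mw, hreachw, hacta, hactb⟩ := conc_marking h
  have haPT : a ∈ W.places ∨ a ∈ W.transitions := by
    rcases hacta with ⟨h1, _⟩ | ⟨h1, _⟩; exacts [Or.inl h1, Or.inr h1]
  have hbPT : b ∈ W.places ∨ b ∈ W.transitions := by
    rcases hactb with ⟨h1, _⟩ | ⟨h1, _⟩; exacts [Or.inl h1, Or.inr h1]
  have hmn : m ∈ W.toPetriNet.nodes := (flow_mem_nodes hmb).1
  rcases haPT with haP | haT
  · rcases hbPT with hbP | hbT
    · exact key hreachw (active_place hacta haP) (active_place hactb hbP)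
        (hasPath_of_isPath hacyc hw hwh hwl) hab
    · -- b transition : use its input m on the path
      have hmpre : m ∈ W.toPetriNet.preset b := mem_preset'.mpr ⟨hmn, hmb⟩
      have hma := conc_PT h haP hbT m hmpre
      obtain ⟨M', hr', hactm, hacta'⟩ := conc_marking hma
      exact key hr' (active_place hacta' haP) (active_place hactm (pre_place hbT hmpre))
        (hasPath_of_isPath hacyc hw' hw'h hw'l) (conc_ne hma).symm
  · obtain ⟨z, hz⟩ := trans_pre_nonempty haT
    have hzf : (z, a) ∈ W.flow := (mem_preset'.mp hz).2
    rcases hbPT with hbP | hbT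
    · have hzb := conc_TP h haT hbP z hz
      obtain ⟨M', hr', hactz, hactb'⟩ := conc_marking hzb
      exact key hr' (active_place hactz (pre_place haT hz)) (active_place hactb' hbP)
        (hasPath_cons hacyc hzf (hasPath_of_isPath hacyc hw hwh hwl)) (conc_ne hzb)
    · have hmpre : m ∈ W.toPetriNet.preset b := mem_preset'.mpr ⟨hmn, hmb⟩
      have hzm := conc_TT h haT hbT z hz m hmpre
      obtain ⟨M', hr', hactz, hactm⟩ := conc_marking hzm
      exact key hr' (active_place hactz (pre_place haT hz))
        (active_place hactm (pre_place hbT hmpre))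
        (hasPath_cons hacyc hzf (hasPath_of_isPath hacyc hw' hw'h hw'l)) (conc_ne hzm)

end WorkflowNet
/-- In a sound acyclic free-choice workflow net: for every place `y`, every node `x`
concurrent with `y`, and every transition `s ∈ y•`, there is no acyclic path from `x`
to `s` iff `x` and `s` are concurrent. -/
theorem case2_no_path_iff_concurrent {α : Type} [DecidableEq α] (W : WorkflowNet α)
    (hfc : W.toPetriNet.FreeChoice) (hacyc : W.toPetriNet.Acyclic) (hsound : W.Sound) :
    ∀ y ∈ W.places, ∀ x : α,
      (x, y) ∈ W.toPetriNet.Concurrent W.initialMarking →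
      ∀ s ∈ W.toPetriNet.postset y, s ∈ W.transitions →
        (¬ W.toPetriNet.HasAcyclicPath x s ↔
          (x, s) ∈ W.toPetriNet.Concurrent W.initialMarking) := by
  open PetriNet WorkflowNet in
  intro y hy x hxy s hs hstr
  constructor
  · intro hnp
    obtain ⟨Mw, hreachw, hactx, hacty⟩ := PetriNet.conc_marking hxy
    have hyM : 1 ≤ Mw y := PetriNet.active_place hacty hy
    have hxy' : x ∈ W.transitions → y ∉ W.toPetriNet.preset x := by
      intro hxtr hyx
      exact PetriNet.conc_ne (PetriNet.conc_TP hxy hxtr hy y hyx) rfl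
    obtain ⟨M', hreach', hact', hens'⟩ := WorkflowNet.enable_with_active hfc hacyc hsound
      hreachw hactx hyM hy hs hstr hnp hxy'
    have hxs : x ≠ s := by
      rintro rfl
      exact hnp (PetriNet.hasPath_refl hacyc (PetriNet.trans_mem_nodes hstr))
    have hys' : (y, s) ∈ W.flow := (PetriNet.mem_postset'.mp hs).2
    refine Set.mem_sUnion.mpr
      ⟨W.toPetriNet.Concurrent W.initialMarking ∪ {(x, s)}, ?_, Or.inr rfl⟩
    rintro q (hq | hq)
    · exact PetriNet.concStep_mono Set.subset_union_left (PetriNet.conc_sub hq)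
    · rw [Set.mem_singleton_iff] at hq
      subst hq
      refine ⟨hxs, ⟨M', hreach', hact', Or.inr ⟨hstr, hens'⟩⟩, ?_, ?_, ?_⟩
      · -- x ∈ T, s ∈ P : impossible
        intro _ hsP
        exact (PetriNet.not_place_and_trans hsP hstr).elim
      · -- x ∈ P, s ∈ T
        intro hxP _ z hz
        left
        have hzx : z ≠ x := by
          rintro rfl
          exact hnp (PetriNet.hasPath_edge hacyc (PetriNet.mem_preset'.mp hz).2)
        exact WorkflowNet.places_conc (PetriNet.pre_place hstr hz) hxP hzx hreach'
          (hens'.2 z hz) (PetriNet.active_place hact' hxP)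
      · -- x ∈ T, s ∈ T
        intro hxT _ z hz z' hz'
        left
        have hne : z ≠ z' := by
          rintro rfl
          have hzpl : z ∈ W.places := PetriNet.pre_place hxT hz
          have hcard : 1 < (W.toPetriNet.postset z).card := by
            rw [Finset.one_lt_card]
            exact ⟨x, PetriNet.mem_postset'.mpr ⟨PetriNet.trans_mem_nodes hxT,
                (PetriNet.mem_preset'.mp hz).2⟩,
              s, PetriNet.mem_postset'.mpr ⟨PetriNet.trans_mem_nodes hstr,
                (PetriNet.mem_preset'.mp hz').2⟩, hxs⟩
          have hprex := hfc z hzpl hcard x (PetriNet.mem_postset'.mpr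
            ⟨PetriNet.trans_mem_nodes hxT, (PetriNet.mem_preset'.mp hz).2⟩)
          have hpres := hfc z hzpl hcard s (PetriNet.mem_postset'.mpr
            ⟨PetriNet.trans_mem_nodes hstr, (PetriNet.mem_preset'.mp hz').2⟩)
          have hyz : y = z := by
            have hyps : y ∈ W.toPetriNet.preset s :=
              PetriNet.mem_preset'.mpr ⟨PetriNet.place_mem_nodes hy, hys'⟩
            rw [hpres] at hyps
            simpa using hyps
          subst hyz
          exact PetriNet.conc_ne (PetriNet.conc_TP hxy hxT hy y (by rw [hprex]; simp)) rfl
        exact WorkflowNet.places_conc (PetriNet.pre_place hxT hz)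
          (PetriNet.pre_place hstr hz') hne hreach'
          ((PetriNet.active_trans hact' hxT).2 z hz) (hens'.2 z' hz')
  · intro hconc
    exact WorkflowNet.conc_no_path hfc hacyc hsound hconc
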